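/- There exist universal constants C1, C2, C3 > 0 with the following property. Fix an integer n ≥ 1, costs c ∈ ℝ^n with all entries positive, an advice vector x' ∈ [0,1]^n, a confidence parameter λ ∈ (0,1), and an integer d with 1 ≤ d ≤ n. Then there exists a function F assigning to every finite sequence F_1,…,F_i of nonempty subsets of {1,…,n} a vector F(F_1,…,F_i) ∈ [0,1]^n such that: for every m ≥ 1 and every sequence F_1,…,F_m of nonempty subsets of {1,…,n} with |F_k| ≤ d for all k, the vectors x^{(i)} := F(F_1,…,F_i) satisfy: (a) x^{(i)} ≤ x^{(i+1)} coordinatewise for every i < m; (b) Σ_{j∈F_k} x^{(i)}_j ≥ 1 for all k ≤ i ≤ m; (c) for every z ∈ [0,1]^n with Σ_{j∈F_k} z_j ≥ 1 for all k ≤ m, one has c·x^{(m)} ≤ C1·log(2d/λ)·(c·z) and also c·x^{(m)} ≤ (C2/(1−λ))·(c·x') + C3·log(2d)·(c·z); (d) if Σ_{j∈F_k} x'_j ≥ 1 for all k ≤ m, then c·x^{(m)} ≤ (C2/(1−λ))·(c·x'). -/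

import Mathlib

open Finset
open scoped Classical

noncomputable section

namespace SC4

variable {n : ℕ}

def cost (c x : Fin n → ℝ) : ℝ := ∑ j, c j * x j

lemma cost_nonneg {c x : Fin n → ℝ} (hc : ∀ j, 0 < c j) (hx : ∀ j, 0 ≤ x j) :
    0 ≤ cost c x :=
  Finset.sum_nonneg fun j _ => mul_nonneg (hc j).le (hx j)

lemma cost_mono {c x y : Fin n → ℝ} (hc : ∀ j, 0 < c j) (h : ∀ j, x j ≤ y j) :
    cost c x ≤ cost c y :=
  Finset.sum_le_sum fun j _ => mul_le_mul_of_nonneg_left (h j) (hc j).le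

def gfun (c : Fin n → ℝ) (d : ℕ) (u : Fin n → ℝ) (F : Finset (Fin n)) (r : ℝ) : ℝ :=
  ∑ j ∈ F, ((u j + 1/d) * Real.exp (r / c j) - 1/d)

def rmin (c : Fin n → ℝ) (d : ℕ) (u : Fin n → ℝ) (F : Finset (Fin n)) : ℝ :=
  sInf {r : ℝ | 0 ≤ r ∧ 1 ≤ gfun c d u F r}

section RminFacts

variable {c : Fin n → ℝ} {d : ℕ} {u : Fin n → ℝ} {F : Finset (Fin n)}

lemma exp_sub_one_le (t : ℝ) : Real.exp t - 1 ≤ t * Real.exp t := by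
  have h1 : -t + 1 ≤ Real.exp (-t) := Real.add_one_le_exp (-t)
  have h2 : (-t + 1) * Real.exp t ≤ Real.exp (-t) * Real.exp t :=
    mul_le_mul_of_nonneg_right h1 (Real.exp_pos t).le
  rw [← Real.exp_add] at h2
  simp only [neg_add_cancel, Real.exp_zero] at h2
  nlinarith [Real.exp_pos t]

lemma gfun_cont : Continuous (gfun c d u F) := by
  unfold gfun
  apply continuous_finset_sum
  intro j _
  fun_prop

lemma term_ge (hc : ∀ j, 0 < c j) (hu : ∀ j, 0 ≤ u j) {r : ℝ} (hr : 0 ≤ r) (j : Fin n) :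
    u j ≤ (u j + 1/d) * Real.exp (r / c j) - 1/d := by
  have he : 1 ≤ Real.exp (r / c j) := Real.one_le_exp (div_nonneg hr (hc j).le)
  have hpos : (0:ℝ) ≤ u j + 1/d := add_nonneg (hu j) (by positivity)
  nlinarith

lemma rmin_spec (hc : ∀ j, 0 < c j) (hd : 1 ≤ d) (hu : ∀ j, 0 ≤ u j) (hF : F.Nonempty) :
    0 ≤ rmin c d u F ∧ 1 ≤ gfun c d u F (rmin c d u F) ∧
      (rmin c d u F = 0 ∨ gfun c d u F (rmin c d u F) ≤ 1) := by
  have hdR : (1:ℝ) ≤ (d:ℝ) := by exact_mod_cast hd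
  have hd0 : (0:ℝ) < (d:ℝ) := by linarith
  set A : Set ℝ := {r : ℝ | 0 ≤ r ∧ 1 ≤ gfun c d u F r} with hA
  have hclosed : IsClosed A := by
    have : A = Set.Ici (0:ℝ) ∩ gfun c d u F ⁻¹' Set.Ici 1 := by
      ext r; simp [hA, Set.mem_setOf_eq, and_comm]
    rw [this]
    exact isClosed_Ici.inter (isClosed_Ici.preimage gfun_cont)
  obtain ⟨j0, hj0⟩ := hF
  have hne : A.Nonempty := by
    refine ⟨c j0 * Real.log ((d:ℝ) + 1), ?_, ?_⟩
    · exact mul_nonneg (hc j0).le (Real.log_nonneg (by linarith))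
    · have hr0 : (0:ℝ) ≤ c j0 * Real.log ((d:ℝ) + 1) :=
        mul_nonneg (hc j0).le (Real.log_nonneg (by linarith))
      have hsingle : (u j0 + 1/d) * Real.exp ((c j0 * Real.log ((d:ℝ)+1)) / c j0) - 1/d ≤
          gfun c d u F (c j0 * Real.log ((d:ℝ)+1)) := by
        unfold gfun
        exact Finset.single_le_sum
          (f := fun j => (u j + 1/d) * Real.exp ((c j0 * Real.log ((d:ℝ)+1)) / c j) - 1/d)
          (fun j _ => le_trans (hu j) (term_ge hc hu hr0 j)) hj0
      have hdiv : (c j0 * Real.log ((d:ℝ)+1)) / c j0 = Real.log ((d:ℝ)+1) := by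
        rw [mul_comm, mul_div_assoc, div_self (hc j0).ne', mul_one]
      rw [hdiv, Real.exp_log (by linarith)] at hsingle
      have : (1:ℝ) ≤ (u j0 + 1/d) * ((d:ℝ)+1) - 1/d := by
        have h1 : (1/(d:ℝ)) * ((d:ℝ)+1) - 1/d = 1 := by field_simp; ring
        nlinarith [hu j0]
      linarith
  have hbdd : BddBelow A := ⟨0, fun r hr => hr.1⟩
  have hmem : rmin c d u F ∈ A := hclosed.csInf_mem hne hbdd
  refine ⟨hmem.1, hmem.2, ?_⟩
  by_cases h0 : 1 ≤ gfun c d u F 0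
  · left
    exact le_antisymm (csInf_le hbdd ⟨le_refl 0, h0⟩) hmem.1
  · right
    by_contra hlt
    push_neg at hlt
    have hrpos : 0 < rmin c d u F := by
      rcases lt_or_eq_of_le hmem.1 with h | h
      · exact h
      · exact absurd (h ▸ hmem.2) h0
    have hopen : IsOpen (gfun c d u F ⁻¹' Set.Ioi 1) := isOpen_Ioi.preimage gfun_cont
    obtain ⟨ε, hε, hball⟩ := Metric.isOpen_iff.mp hopen _ (by simpa using hlt)
    set y := max 0 (rmin c d u F - ε/2) with hy
    have hy1 : y < rmin c d u F := max_lt hrpos (by linarith)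
    have hy2 : y ∈ Metric.ball (rmin c d u F) ε := by
      rw [Metric.mem_ball, Real.dist_eq, abs_of_nonpos (by linarith)]
      have : rmin c d u F - ε/2 ≤ y := le_max_right _ _
      linarith
    have hgy : 1 < gfun c d u F y := hball hy2
    exact absurd (csInf_le hbdd ⟨le_max_left _ _, hgy.le⟩) (not_le.mpr hy1)

end RminFacts


def stepv (x' v : Fin n → ℝ) (F : Finset (Fin n)) : Fin n → ℝ :=
  fun j => if j ∈ F then max (v j) (x' j) else v j

def stepu (c : Fin n → ℝ) (d : ℕ) (u : Fin n → ℝ) (F : Finset (Fin n)) : Fin n → ℝ :=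
  fun j => if j ∈ F then (u j + 1/d) * Real.exp (rmin c d u F / c j) - 1/d else u j

section StepFacts

variable {c x' : Fin n → ℝ} {d : ℕ} {u v : Fin n → ℝ} {F : Finset (Fin n)}

lemma stepv_ge (j : Fin n) : v j ≤ stepv x' v F j := by
  unfold stepv; split
  · exact le_max_left _ _
  · exact le_refl _

lemma stepv_le (hv : ∀ j, v j ≤ x' j) (j : Fin n) : stepv x' v F j ≤ x' j := by
  unfold stepv; split
  · exact max_le (hv j) (le_refl _)
  · exact hv j

lemma stepv_sum (hF : True) : ∑ j ∈ F, x' j ≤ ∑ j ∈ F, stepv x' v F j := by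
  apply Finset.sum_le_sum
  intro j hj
  unfold stepv
  rw [if_pos hj]
  exact le_max_right _ _

lemma stepu_ge (hc : ∀ j, 0 < c j) (hd : 1 ≤ d) (hu : ∀ j, 0 ≤ u j) (hF : F.Nonempty)
    (j : Fin n) : u j ≤ stepu c d u F j := by
  unfold stepu; split
  · exact term_ge hc hu (rmin_spec hc hd hu hF).1 j
  · exact le_refl _

lemma stepu_sum (hc : ∀ j, 0 < c j) (hd : 1 ≤ d) (hu : ∀ j, 0 ≤ u j) (hF : F.Nonempty) :
    1 ≤ ∑ j ∈ F, stepu c d u F j := by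
  have h : ∑ j ∈ F, stepu c d u F j = gfun c d u F (rmin c d u F) := by
    unfold stepu gfun
    exact Finset.sum_congr rfl fun j hj => by rw [if_pos hj]
  rw [h]
  exact (rmin_spec hc hd hu hF).2.1

lemma stepu_le_one (hc : ∀ j, 0 < c j) (hd : 1 ≤ d) (hu : ∀ j, 0 ≤ u j)
    (hu1 : ∀ j, u j ≤ 1) (hF : F.Nonempty) (j : Fin n) : stepu c d u F j ≤ 1 := by
  unfold stepu
  split
  case isFalse => exact hu1 j
  case isTrue hj =>
    rcases (rmin_spec hc hd hu hF).2.2 with h0 | hle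
    · rw [h0, zero_div, Real.exp_zero]
      have : (u j + 1/d) * 1 - 1/d = u j := by ring
      rw [this]; exact hu1 j
    · calc (u j + 1/d) * Real.exp (rmin c d u F / c j) - 1/d
          ≤ gfun c d u F (rmin c d u F) := by
            unfold gfun
            exact Finset.single_le_sum
              (f := fun j => (u j + 1/d) * Real.exp (rmin c d u F / c j) - 1/d)
              (fun i _ => le_trans (hu i) (term_ge hc hu (rmin_spec hc hd hu hF).1 i)) hj
        _ ≤ 1 := hle

lemma stepu_cost (hc : ∀ j, 0 < c j) (hd : 1 ≤ d) (hu : ∀ j, 0 ≤ u j) (hF : F.Nonempty)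
    (hcard : F.card ≤ d) :
    cost c (stepu c d u F) ≤ cost c u + 2 * rmin c d u F := by
  have hdR : (1:ℝ) ≤ (d:ℝ) := by exact_mod_cast hd
  have hd0 : (0:ℝ) < (d:ℝ) := by linarith
  obtain ⟨hr0, hg1, hdich⟩ := rmin_spec hc hd hu hF
  have e1 : cost c (stepu c d u F) = cost c u + ∑ j, c j * (stepu c d u F j - u j) := by
    unfold cost
    rw [← Finset.sum_add_distrib]
    exact Finset.sum_congr rfl fun j _ => by ring
  have e2 : ∑ j, c j * (stepu c d u F j - u j) = ∑ j ∈ F, c j * (stepu c d u F j - u j) :=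
    (Finset.sum_subset (Finset.subset_univ F) (fun j _ hj => by simp [stepu, hj])).symm
  rw [e1, e2]
  rcases hdich with h0 | hle
  · have : ∀ j ∈ F, c j * (stepu c d u F j - u j) = 0 := by
      intro j hj
      unfold stepu
      rw [if_pos hj, h0, zero_div, Real.exp_zero]
      ring
    rw [Finset.sum_congr rfl this, Finset.sum_const_zero]
    linarith
  · have hb : ∀ j ∈ F, c j * (stepu c d u F j - u j) ≤
        rmin c d u F * (stepu c d u F j + 1/d) := by
      intro j hj
      unfold stepu
      rw [if_pos hj]
      set t := rmin c d u F / c j with ht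
      have htn : 0 ≤ t := div_nonneg hr0 (hc j).le
      have hct : c j * t = rmin c d u F := by
        rw [ht, mul_comm, div_mul_cancel₀ _ (hc j).ne']
      have hkey : Real.exp t - 1 ≤ t * Real.exp t := exp_sub_one_le t
      have hun : (0:ℝ) ≤ u j + 1/d := add_nonneg (hu j) (by positivity)
      have h5 : c j * ((u j + 1/d) * (Real.exp t - 1)) ≤
          c j * ((u j + 1/d) * (t * Real.exp t)) :=
        mul_le_mul_of_nonneg_left (mul_le_mul_of_nonneg_left hkey hun) (hc j).le
      have h6 : c j * ((u j + 1/d) * (t * Real.exp t)) =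
          rmin c d u F * ((u j + 1/d) * Real.exp t) := by
        rw [← hct]; ring
      calc c j * ((u j + 1/d) * Real.exp t - 1/d - u j)
          = c j * ((u j + 1/d) * (Real.exp t - 1)) := by ring
        _ ≤ rmin c d u F * ((u j + 1/d) * Real.exp t) := by rw [← h6]; exact h5
        _ = rmin c d u F * ((u j + 1/d) * Real.exp t - 1/d + 1/d) := by ring
    have hsum : ∑ j ∈ F, c j * (stepu c d u F j - u j) ≤
        ∑ j ∈ F, rmin c d u F * (stepu c d u F j + 1/d) := Finset.sum_le_sum hb
    have hsum2 : ∑ j ∈ F, rmin c d u F * (stepu c d u F j + 1/d) =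
        rmin c d u F * (gfun c d u F (rmin c d u F) + F.card * (1/d)) := by
      rw [← Finset.mul_sum]
      congr 1
      rw [Finset.sum_add_distrib, Finset.sum_const, nsmul_eq_mul]
      congr 1
      unfold stepu gfun
      exact Finset.sum_congr rfl fun j hj => by rw [if_pos hj]
    have hcd : (F.card : ℝ) * (1/d) ≤ 1 := by
      rw [mul_one_div, div_le_one hd0]
      exact_mod_cast hcard
    have : rmin c d u F * (gfun c d u F (rmin c d u F) + F.card * (1/d)) ≤
        rmin c d u F * 2 := by
      apply mul_le_mul_of_nonneg_left _ hr0
      linarith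
    linarith

lemma stepu_pot (hc : ∀ j, 0 < c j) (hd : 1 ≤ d) (hu : ∀ j, 0 ≤ u j) (hF : F.Nonempty)
    {z : Fin n → ℝ} (hz : ∀ j, 0 ≤ z j) (hzF : 1 ≤ ∑ j ∈ F, z j) :
    (∑ j, z j * c j * Real.log (d * u j + 1)) + rmin c d u F ≤
      ∑ j, z j * c j * Real.log (d * stepu c d u F j + 1) := by
  have hdR : (1:ℝ) ≤ (d:ℝ) := by exact_mod_cast hd
  have hd0 : (0:ℝ) < (d:ℝ) := by linarith
  obtain ⟨hr0, hg1, hdich⟩ := rmin_spec hc hd hu hF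
  have hper : ∀ j, z j * c j * Real.log (d * stepu c d u F j + 1) =
      z j * c j * Real.log (d * u j + 1) + (if j ∈ F then z j * rmin c d u F else 0) := by
    intro j
    unfold stepu
    by_cases hj : j ∈ F
    · rw [if_pos hj, if_pos hj]
      have harg : (d:ℝ) * ((u j + 1/d) * Real.exp (rmin c d u F / c j) - 1/d) + 1 =
          ((d:ℝ) * u j + 1) * Real.exp (rmin c d u F / c j) := by
        field_simp
        ring
      rw [harg, Real.log_mul (by nlinarith [hu j]) (Real.exp_ne_zero _), Real.log_exp]
      have hcc : c j * (rmin c d u F / c j) = rmin c d u F := by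
        rw [mul_comm, div_mul_cancel₀ _ (hc j).ne']
      calc z j * c j * (Real.log ((d:ℝ) * u j + 1) + rmin c d u F / c j)
          = z j * c j * Real.log ((d:ℝ) * u j + 1) +
              z j * (c j * (rmin c d u F / c j)) := by ring
        _ = z j * c j * Real.log ((d:ℝ) * u j + 1) + z j * rmin c d u F := by rw [hcc]
    · rw [if_neg hj, if_neg hj]; ring
  calc (∑ j, z j * c j * Real.log (d * u j + 1)) + rmin c d u F
      ≤ (∑ j, z j * c j * Real.log (d * u j + 1)) +
          (∑ j ∈ F, z j) * rmin c d u F := by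
        nlinarith [hzF, hr0]
    _ = ∑ j, (z j * c j * Real.log (d * u j + 1) + (if j ∈ F then z j * rmin c d u F else 0)) := by
        rw [Finset.sum_add_distrib]
        congr 1
        rw [Finset.sum_ite_mem, Finset.univ_inter, Finset.sum_mul]
    _ = ∑ j, z j * c j * Real.log (d * stepu c d u F j + 1) :=
        (Finset.sum_congr rfl fun j _ => (hper j).symm)

end StepFacts


def feasSet (c : Fin n → ℝ) (i : ℕ) (Fs : Fin i → Finset (Fin n)) : Set ℝ :=
  {t : ℝ | ∃ z : Fin n → ℝ, (∀ j, 0 ≤ z j ∧ z j ≤ 1) ∧ (∀ k, 1 ≤ ∑ j ∈ Fs k, z j) ∧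
    t = cost c z}

def OPTv (c : Fin n → ℝ) (i : ℕ) (Fs : Fin i → Finset (Fin n)) : ℝ :=
  sInf (feasSet c i Fs)

section OptFacts

variable {c : Fin n → ℝ} {i : ℕ}

lemma feas_lb (hc : ∀ j, 0 < c j) {Fs : Fin i → Finset (Fin n)} :
    ∀ t ∈ feasSet c i Fs, 0 ≤ t := by
  rintro t ⟨z, hz, _, rfl⟩
  exact cost_nonneg hc fun j => (hz j).1

lemma feas_bdd (hc : ∀ j, 0 < c j) {Fs : Fin i → Finset (Fin n)} :
    BddBelow (feasSet c i Fs) := ⟨0, feas_lb hc⟩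

lemma feas_ne {Fs : Fin i → Finset (Fin n)} (hne : ∀ k, (Fs k).Nonempty) :
    (feasSet c i Fs).Nonempty := by
  refine ⟨cost c (fun _ => 1), fun _ => 1, fun j => ⟨zero_le_one, le_refl _⟩, fun k => ?_, rfl⟩
  rw [Finset.sum_const, nsmul_eq_mul, mul_one]
  exact_mod_cast (hne k).card_pos

lemma opt_nonneg (hc : ∀ j, 0 < c j) {Fs : Fin i → Finset (Fin n)} :
    0 ≤ OPTv c i Fs :=
  Real.sInf_nonneg (feas_lb hc)

lemma opt_le (hc : ∀ j, 0 < c j) {Fs : Fin i → Finset (Fin n)} {z : Fin n → ℝ}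
    (hz : ∀ j, 0 ≤ z j ∧ z j ≤ 1) (hcov : ∀ k, 1 ≤ ∑ j ∈ Fs k, z j) :
    OPTv c i Fs ≤ cost c z :=
  csInf_le (feas_bdd hc) ⟨z, hz, hcov, rfl⟩

lemma opt_mono (hc : ∀ j, 0 < c j) {Fs : Fin (i+1) → Finset (Fin n)}
    (hne : ∀ k, (Fs k).Nonempty) :
    OPTv c i (fun k => Fs k.castSucc) ≤ OPTv c (i+1) Fs := by
  apply csInf_le_csInf (feas_bdd hc) (feas_ne hne)
  rintro t ⟨z, hz, hcov, rfl⟩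
  exact ⟨z, hz, fun k => hcov k.castSucc, rfl⟩

end OptFacts

def applies (c x' : Fin n → ℝ) (lam : ℝ) (d : ℕ) (v : Fin n → ℝ) (F : Finset (Fin n))
    (opt : ℝ) : Prop :=
  1 ≤ ∑ j ∈ F, x' j ∧ cost c (stepv x' v F) ≤ 2 * Real.log (2 * d / lam) * opt

def St (c x' : Fin n → ℝ) (lam : ℝ) (d : ℕ) :
    (i : ℕ) → (Fin i → Finset (Fin n)) → (Fin n → ℝ) × (Fin n → ℝ)
  | 0, _ => (fun _ => 0, fun _ => 0)
  | (i+1), Fs =>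
      let p := St c x' lam d i (fun k => Fs k.castSucc)
      let F := Fs (Fin.last i)
      if applies c x' lam d p.1 F (OPTv c (i+1) Fs) then (stepv x' p.1 F, p.2)
      else (p.1, stepu c d p.2 F)

lemma St_succ (c x' : Fin n → ℝ) (lam : ℝ) (d : ℕ) (i : ℕ) (Fs : Fin (i+1) → Finset (Fin n)) :
    St c x' lam d (i+1) Fs =
      (let p := St c x' lam d i (fun k => Fs k.castSucc)
       let F := Fs (Fin.last i)
       if applies c x' lam d p.1 F (OPTv c (i+1) Fs) then (stepv x' p.1 F, p.2)
       else (p.1, stepu c d p.2 F)) := rfl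

lemma box (c x' : Fin n → ℝ) (lam : ℝ) (d : ℕ)
    (hc : ∀ j, 0 < c j) (hx' : ∀ j, 0 ≤ x' j ∧ x' j ≤ 1) (hd : 1 ≤ d) :
    ∀ (i : ℕ) (Fs : Fin i → Finset (Fin n)), (∀ k, (Fs k).Nonempty) →
      (∀ j, 0 ≤ (St c x' lam d i Fs).1 j ∧ (St c x' lam d i Fs).1 j ≤ x' j) ∧
      (∀ j, 0 ≤ (St c x' lam d i Fs).2 j ∧ (St c x' lam d i Fs).2 j ≤ 1) := by
  intro i
  induction i with
  | zero =>
    intro Fs _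
    exact ⟨fun j => ⟨le_refl _, (hx' j).1⟩, fun j => ⟨le_refl _, zero_le_one⟩⟩
  | succ i ih =>
    intro Fs hFs
    obtain ⟨ihv, ihu⟩ := ih (fun k => Fs k.castSucc) (fun k => hFs _)
    rw [St_succ]
    simp only
    split
    · constructor
      · intro j
        refine ⟨le_trans (ihv j).1 (stepv_ge j), stepv_le (fun j => (ihv j).2) j⟩
      · exact ihu
    · refine ⟨ihv, fun j => ?_⟩
      have hu0 : ∀ j, 0 ≤ (St c x' lam d i fun k => Fs k.castSucc).2 j := fun j => (ihu j).1
      have hu1 : ∀ j, (St c x' lam d i fun k => Fs k.castSucc).2 j ≤ 1 := fun j => (ihu j).2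
      exact ⟨le_trans (hu0 j) (stepu_ge hc hd hu0 (hFs _) j),
        stepu_le_one hc hd hu0 hu1 (hFs _) j⟩


def pfx (Fk : ℕ → Finset (Fin n)) (i : ℕ) : Fin i → Finset (Fin n) := fun k => Fk k.1

def Applied (c x' : Fin n → ℝ) (lam : ℝ) (d : ℕ) (Fk : ℕ → Finset (Fin n)) (k : ℕ) : Prop :=
  applies c x' lam d (St c x' lam d k (pfx Fk k)).1 (Fk k) (OPTv c (k+1) (pfx Fk (k+1)))

lemma St_succ_pfx (c x' : Fin n → ℝ) (lam : ℝ) (d : ℕ) (Fk : ℕ → Finset (Fin n)) (i : ℕ) :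
    St c x' lam d (i+1) (pfx Fk (i+1)) =
      (if Applied c x' lam d Fk i then
        (stepv x' (St c x' lam d i (pfx Fk i)).1 (Fk i), (St c x' lam d i (pfx Fk i)).2)
      else
        ((St c x' lam d i (pfx Fk i)).1, stepu c d (St c x' lam d i (pfx Fk i)).2 (Fk i))) :=
  rfl

section Main

variable (c x' : Fin n → ℝ) (lam : ℝ) (d : ℕ) (Fk : ℕ → Finset (Fin n))
variable {m : ℕ}

lemma hL_nonneg (hd : 1 ≤ d) (hlam0 : 0 < lam) (hlam1 : lam < 1) :
    0 ≤ Real.log (2 * (d:ℝ) / lam) := by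
  have hdR : (1:ℝ) ≤ (d:ℝ) := by exact_mod_cast hd
  apply Real.log_nonneg
  rw [le_div_iff₀ hlam0]
  nlinarith

lemma main_Q (hc : ∀ j, 0 < c j) (hx' : ∀ j, 0 ≤ x' j ∧ x' j ≤ 1) (hd : 1 ≤ d)
    (hlam0 : 0 < lam) (hlam1 : lam < 1)
    (hne : ∀ k, k < m → (Fk k).Nonempty) (hcard : ∀ k, k < m → (Fk k).card ≤ d) :
    ∀ i, i ≤ m →
      (cost c (St c x' lam d i (pfx Fk i)).1 ≤
        2 * Real.log (2 * (d:ℝ) / lam) * OPTv c i (pfx Fk i)) ∧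
      (∀ z : Fin n → ℝ, (∀ j, 0 ≤ z j) →
        (∀ k, k < i → ¬ Applied c x' lam d Fk k → 1 ≤ ∑ j ∈ Fk k, z j) →
        cost c (St c x' lam d i (pfx Fk i)).2 ≤
          2 * ∑ j, z j * c j * Real.log (d * (St c x' lam d i (pfx Fk i)).2 j + 1)) ∧
      (∀ k, k < i →
        1 ≤ ∑ j ∈ Fk k, max ((St c x' lam d i (pfx Fk i)).1 j)
          ((St c x' lam d i (pfx Fk i)).2 j)) := by
  intro i
  induction i with
  | zero =>
    intro _
    refine ⟨?_, ?_, fun k hk => absurd hk (Nat.not_lt_zero k)⟩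
    · have h0 : cost c (St c x' lam d 0 (pfx Fk 0)).1 = 0 := by
        simp [St, cost]
      rw [h0]
      exact mul_nonneg (by linarith [hL_nonneg lam d hd hlam0 hlam1]) (opt_nonneg hc)
    · intro z hz _
      have h0 : cost c (St c x' lam d 0 (pfx Fk 0)).2 = 0 := by simp [St, cost]
      rw [h0]
      have : ∀ j : Fin n, z j * c j * Real.log (d * (St c x' lam d 0 (pfx Fk 0)).2 j + 1) = 0 := by
        intro j; simp [St]
      rw [Finset.sum_congr rfl fun j _ => this j]
      simp
  | succ i ih =>
    intro him
    have him' : i ≤ m := le_of_lt him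
    have hilt : i < m := him
    obtain ⟨ih1, ih2, ih3⟩ := ih him'
    have hbox := box c x' lam d hc hx' hd i (pfx Fk i)
      (fun k => hne k.1 (lt_of_lt_of_le k.2 him'))
    have hv0 : ∀ j, 0 ≤ (St c x' lam d i (pfx Fk i)).1 j := fun j => (hbox.1 j).1
    have hvx : ∀ j, (St c x' lam d i (pfx Fk i)).1 j ≤ x' j := fun j => (hbox.1 j).2
    have hu0 : ∀ j, 0 ≤ (St c x' lam d i (pfx Fk i)).2 j := fun j => (hbox.2 j).1
    have hu1 : ∀ j, (St c x' lam d i (pfx Fk i)).2 j ≤ 1 := fun j => (hbox.2 j).2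
    have hFne : (Fk i).Nonempty := hne i hilt
    have hL : 0 ≤ Real.log (2 * (d:ℝ) / lam) := hL_nonneg lam d hd hlam0 hlam1
    rw [St_succ_pfx]
    by_cases hA : Applied c x' lam d Fk i
    · rw [if_pos hA]
      refine ⟨hA.2, ?_, ?_⟩
      · intro z hz hcov
        exact ih2 z hz (fun k hk hnk => hcov k (Nat.lt_succ_of_lt hk) hnk)
      · intro k hk
        rcases Nat.lt_succ_iff_lt_or_eq.mp hk with hk' | rfl
        · refine le_trans (ih3 k hk') (Finset.sum_le_sum fun j _ => ?_)
          exact max_le_max (stepv_ge j) (le_refl _)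
        · calc (1:ℝ) ≤ ∑ j ∈ Fk k, x' j := hA.1
            _ ≤ ∑ j ∈ Fk k, stepv x' (St c x' lam d k (pfx Fk k)).1 (Fk k) j :=
              stepv_sum trivial
            _ ≤ ∑ j ∈ Fk k, max (stepv x' (St c x' lam d k (pfx Fk k)).1 (Fk k) j)
                ((St c x' lam d k (pfx Fk k)).2 j) :=
              Finset.sum_le_sum fun j _ => le_max_left _ _
    · rw [if_neg hA]
      refine ⟨?_, ?_, ?_⟩
      · calc cost c (St c x' lam d i (pfx Fk i)).1
            ≤ 2 * Real.log (2 * (d:ℝ) / lam) * OPTv c i (pfx Fk i) := ih1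
          _ ≤ 2 * Real.log (2 * (d:ℝ) / lam) * OPTv c (i+1) (pfx Fk (i+1)) := by
              apply mul_le_mul_of_nonneg_left _ (by linarith)
              exact opt_mono hc (fun k => hne k.1 (lt_of_lt_of_le k.2 him))
      · intro z hz hcov
        have hzFi : 1 ≤ ∑ j ∈ Fk i, z j := hcov i (Nat.lt_succ_self i) hA
        calc cost c (stepu c d (St c x' lam d i (pfx Fk i)).2 (Fk i))
            ≤ cost c (St c x' lam d i (pfx Fk i)).2 +
              2 * rmin c d (St c x' lam d i (pfx Fk i)).2 (Fk i) :=
              stepu_cost hc hd hu0 hFne (hcard i hilt)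
          _ ≤ (2 * ∑ j, z j * c j * Real.log (d * (St c x' lam d i (pfx Fk i)).2 j + 1)) +
              2 * rmin c d (St c x' lam d i (pfx Fk i)).2 (Fk i) := by
              have := ih2 z hz (fun k hk hnk => hcov k (Nat.lt_succ_of_lt hk) hnk)
              linarith
          _ = 2 * ((∑ j, z j * c j * Real.log (d * (St c x' lam d i (pfx Fk i)).2 j + 1)) +
              rmin c d (St c x' lam d i (pfx Fk i)).2 (Fk i)) := by ring
          _ ≤ 2 * ∑ j, z j * c j *
              Real.log (d * stepu c d (St c x' lam d i (pfx Fk i)).2 (Fk i) j + 1) := by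
              have := stepu_pot hc hd hu0 hFne hz hzFi
              linarith
      · intro k hk
        rcases Nat.lt_succ_iff_lt_or_eq.mp hk with hk' | rfl
        · refine le_trans (ih3 k hk') (Finset.sum_le_sum fun j _ => ?_)
          exact max_le_max (le_refl _) (stepu_ge hc hd hu0 hFne j)
        · calc (1:ℝ) ≤ ∑ j ∈ Fk k, stepu c d (St c x' lam d k (pfx Fk k)).2 (Fk k) j :=
              stepu_sum hc hd hu0 hFne
            _ ≤ ∑ j ∈ Fk k, max ((St c x' lam d k (pfx Fk k)).1 j)
                (stepu c d (St c x' lam d k (pfx Fk k)).2 (Fk k) j) :=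
              Finset.sum_le_sum fun j _ => le_max_right _ _

lemma St_mono (hc : ∀ j, 0 < c j) (hx' : ∀ j, 0 ≤ x' j ∧ x' j ≤ 1) (hd : 1 ≤ d)
    (hne : ∀ k, k < m → (Fk k).Nonempty) :
    ∀ i, i < m → ∀ j,
      (St c x' lam d i (pfx Fk i)).1 j ≤ (St c x' lam d (i+1) (pfx Fk (i+1))).1 j ∧
      (St c x' lam d i (pfx Fk i)).2 j ≤ (St c x' lam d (i+1) (pfx Fk (i+1))).2 j := by
  intro i him j
  have hbox := box c x' lam d hc hx' hd i (pfx Fk i)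
    (fun k => hne k.1 (lt_of_lt_of_le k.2 (le_of_lt him)))
  have hu0 : ∀ j, 0 ≤ (St c x' lam d i (pfx Fk i)).2 j := fun j => (hbox.2 j).1
  rw [St_succ_pfx]
  by_cases hA : Applied c x' lam d Fk i
  · rw [if_pos hA]
    exact ⟨stepv_ge j, le_refl _⟩
  · rw [if_neg hA]
    exact ⟨le_refl _, stepu_ge hc hd hu0 (hne i him) j⟩

end Main


end SC4

open SC4 in
/-- Learning-augmented online fractional set cover with fractional advice
(Corollary 2.4): there is an online algorithm `F` (mapping each prefix of arriving
elements, given as nonempty subsets of set indices of size at most `d`, to a fractional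
solution in `[0,1]^n`) that is monotone, feasible, `O(log(d/λ))`-robust and
`O(1/(1−λ))`-consistent. -/
theorem stmt4 :
    ∃ C1 C2 C3 : ℝ, 0 < C1 ∧ 0 < C2 ∧ 0 < C3 ∧
      ∀ (n : ℕ), 1 ≤ n →
      ∀ (c x' : Fin n → ℝ), (∀ j, 0 < c j) → (∀ j, 0 ≤ x' j ∧ x' j ≤ 1) →
      ∀ (lam : ℝ), 0 < lam → lam < 1 →
      ∀ (d : ℕ), 1 ≤ d → d ≤ n →
      ∃ F : (i : ℕ) → (Fin i → Finset (Fin n)) → (Fin n → ℝ),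
        -- F always outputs a vector in [0,1]^n on sequences of nonempty subsets
        (∀ (i : ℕ) (Fs : Fin i → Finset (Fin n)),
          (∀ k, (Fs k).Nonempty) → ∀ j, 0 ≤ F i Fs j ∧ F i Fs j ≤ 1) ∧
        ∀ (m : ℕ), 1 ≤ m → ∀ (Fk : ℕ → Finset (Fin n)),
          (∀ k, k < m → (Fk k).Nonempty) →
          (∀ k, k < m → (Fk k).card ≤ d) →
          -- (a) monotonicity
          ((∀ i, i < m → ∀ j,
              F i (fun k : Fin i => Fk k.1) j ≤ F (i + 1) (fun k : Fin (i + 1) => Fk k.1) j) ∧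
          -- (b) feasibility
          (∀ i, i ≤ m → ∀ k, k < i →
              1 ≤ ∑ j ∈ Fk k, F i (fun k' : Fin i => Fk k'.1) j) ∧
          -- (c) robustness and consistency against any feasible z ∈ [0,1]^n
          (∀ z : Fin n → ℝ, (∀ j, 0 ≤ z j ∧ z j ≤ 1) →
            (∀ k, k < m → 1 ≤ ∑ j ∈ Fk k, z j) →
            (∑ j, c j * F m (fun k : Fin m => Fk k.1) j ≤
              C1 * Real.log (2 * (d : ℝ) / lam) * ∑ j, c j * z j) ∧
            (∑ j, c j * F m (fun k : Fin m => Fk k.1) j ≤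
              C2 / (1 - lam) * ∑ j, c j * x' j +
                C3 * Real.log (2 * (d : ℝ)) * ∑ j, c j * z j)) ∧
          -- (d) consistency when the advice is feasible
          ((∀ k, k < m → 1 ≤ ∑ j ∈ Fk k, x' j) →
            ∑ j, c j * F m (fun k : Fin m => Fk k.1) j ≤
              C2 / (1 - lam) * ∑ j, c j * x' j)) := by
  refine ⟨4, 2, 2, by norm_num, by norm_num, by norm_num, ?_⟩
  intro n hn c x' hc hx' lam hlam0 hlam1 d hd hdn
  refine ⟨fun i Fs j => max ((St c x' lam d i Fs).1 j) ((St c x' lam d i Fs).2 j), ?_, ?_⟩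
  · intro i Fs hFs j
    obtain ⟨hv, hu⟩ := box c x' lam d hc hx' hd i Fs hFs
    exact ⟨le_max_of_le_left (hv j).1, max_le (le_trans (hv j).2 (hx' j).2) (hu j).2⟩
  intro m hm Fk hne hcard
  have hdR : (1:ℝ) ≤ (d:ℝ) := by exact_mod_cast hd
  have hQ := main_Q c x' lam d Fk hc hx' hd hlam0 hlam1 hne hcard
  have hboxm := box c x' lam d hc hx' hd m (pfx Fk m) (fun k => hne k.1 k.2)
  have hV0 : ∀ j, 0 ≤ (St c x' lam d m (pfx Fk m)).1 j := fun j => (hboxm.1 j).1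
  have hVx : ∀ j, (St c x' lam d m (pfx Fk m)).1 j ≤ x' j := fun j => (hboxm.1 j).2
  have hU0 : ∀ j, 0 ≤ (St c x' lam d m (pfx Fk m)).2 j := fun j => (hboxm.2 j).1
  have hU1 : ∀ j, (St c x' lam d m (pfx Fk m)).2 j ≤ 1 := fun j => (hboxm.2 j).2
  have hkey : (∑ j, c j * max ((St c x' lam d m (pfx Fk m)).1 j)
      ((St c x' lam d m (pfx Fk m)).2 j)) ≤
      cost c (St c x' lam d m (pfx Fk m)).1 + cost c (St c x' lam d m (pfx Fk m)).2 := by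
    unfold cost
    rw [← Finset.sum_add_distrib]
    apply Finset.sum_le_sum
    intro j _
    rw [← mul_add]
    apply mul_le_mul_of_nonneg_left _ (hc j).le
    exact max_le (le_add_of_nonneg_right (hU0 j)) (le_add_of_nonneg_left (hV0 j))
  have hlog2d_pos : 0 < Real.log (2 * (d:ℝ)) := Real.log_pos (by linarith)
  have hlogle : Real.log (2 * (d:ℝ)) ≤ Real.log (2 * (d:ℝ) / lam) := by
    apply Real.log_le_log (by linarith)
    rw [le_div_iff₀ hlam0]
    nlinarith
  have hcx'0 : 0 ≤ cost c x' := cost_nonneg hc fun j => (hx' j).1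
  have h1div : (1:ℝ) ≤ 2 / (1 - lam) := by
    rw [le_div_iff₀ (by linarith)]
    linarith
  have hVx' : cost c (St c x' lam d m (pfx Fk m)).1 ≤ cost c x' := cost_mono hc hVx
  -- generic: from potential bound to log(2d) * cost z
  have hUbound : ∀ z : Fin n → ℝ, (∀ j, 0 ≤ z j) →
      (∀ k, k < m → ¬ Applied c x' lam d Fk k → 1 ≤ ∑ j ∈ Fk k, z j) →
      cost c (St c x' lam d m (pfx Fk m)).2 ≤ 2 * Real.log (2 * (d:ℝ)) * cost c z := by
    intro z hz hcov
    have h2 := (hQ m le_rfl).2.1 z hz hcov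
    have hstep : (∑ j, z j * c j * Real.log (d * (St c x' lam d m (pfx Fk m)).2 j + 1)) ≤
        Real.log (2 * (d:ℝ)) * cost c z := by
      have hper : ∀ j : Fin n, z j * c j * Real.log (d * (St c x' lam d m (pfx Fk m)).2 j + 1) ≤
          z j * c j * Real.log (2 * (d:ℝ)) := by
        intro j
        apply mul_le_mul_of_nonneg_left _ (mul_nonneg (hz j) (hc j).le)
        apply Real.log_le_log (by nlinarith [hU0 j])
        nlinarith [hU1 j]
      calc (∑ j, z j * c j * Real.log (d * (St c x' lam d m (pfx Fk m)).2 j + 1))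
          ≤ ∑ j, z j * c j * Real.log (2 * (d:ℝ)) := Finset.sum_le_sum fun j _ => hper j
        _ = Real.log (2 * (d:ℝ)) * cost c z := by
            unfold cost
            rw [Finset.mul_sum]
            exact Finset.sum_congr rfl fun j _ => by ring
    calc cost c (St c x' lam d m (pfx Fk m)).2
        ≤ 2 * ∑ j, z j * c j * Real.log (d * (St c x' lam d m (pfx Fk m)).2 j + 1) := h2
      _ ≤ 2 * (Real.log (2 * (d:ℝ)) * cost c z) := by linarith
      _ = 2 * Real.log (2 * (d:ℝ)) * cost c z := by ring
  refine ⟨?_, ?_, ?_, ?_⟩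
  · -- (a) monotonicity
    intro i him j
    have := St_mono c x' lam d Fk hc hx' hd hne i him j
    exact max_le_max this.1 this.2
  · -- (b) feasibility
    intro i him k hk
    exact (hQ i him).2.2 k hk
  · -- (c)
    intro z hz hcov
    have hz0 : ∀ j, 0 ≤ z j := fun j => (hz j).1
    have hcz0 : 0 ≤ cost c z := cost_nonneg hc hz0
    have hU := hUbound z hz0 (fun k hk _ => hcov k hk)
    constructor
    · -- robustness
      have hVopt : cost c (St c x' lam d m (pfx Fk m)).1 ≤
          2 * Real.log (2 * (d:ℝ) / lam) * OPTv c m (pfx Fk m) := (hQ m le_rfl).1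
      have hOle : OPTv c m (pfx Fk m) ≤ cost c z := opt_le hc hz (fun k => hcov k.1 k.2)
      have hL : 0 ≤ Real.log (2 * (d:ℝ) / lam) := hL_nonneg lam d hd hlam0 hlam1
      calc (∑ j, c j * max ((St c x' lam d m (pfx Fk m)).1 j) ((St c x' lam d m (pfx Fk m)).2 j))
          ≤ cost c (St c x' lam d m (pfx Fk m)).1 + cost c (St c x' lam d m (pfx Fk m)).2 := hkey
        _ ≤ 2 * Real.log (2 * (d:ℝ) / lam) * cost c z +
            2 * Real.log (2 * (d:ℝ)) * cost c z := by
            have : 2 * Real.log (2 * (d:ℝ) / lam) * OPTv c m (pfx Fk m) ≤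
                2 * Real.log (2 * (d:ℝ) / lam) * cost c z :=
              mul_le_mul_of_nonneg_left hOle (by linarith)
            linarith
        _ ≤ 4 * Real.log (2 * (d:ℝ) / lam) * cost c z := by nlinarith
        _ = 4 * Real.log (2 * (d:ℝ) / lam) * ∑ j, c j * z j := by rfl
    · -- second bound
      calc (∑ j, c j * max ((St c x' lam d m (pfx Fk m)).1 j) ((St c x' lam d m (pfx Fk m)).2 j))
          ≤ cost c (St c x' lam d m (pfx Fk m)).1 + cost c (St c x' lam d m (pfx Fk m)).2 := hkey
        _ ≤ cost c x' + 2 * Real.log (2 * (d:ℝ)) * cost c z := by linarith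
        _ ≤ 2 / (1 - lam) * cost c x' + 2 * Real.log (2 * (d:ℝ)) * cost c z := by nlinarith
        _ = 2 / (1 - lam) * (∑ j, c j * x' j) + 2 * Real.log (2 * (d:ℝ)) * ∑ j, c j * z j := rfl
  · -- (d) consistency
    intro hadv
    have hUcx' : cost c (St c x' lam d m (pfx Fk m)).2 ≤ cost c x' := by
      by_cases hKne : ((Finset.range m).filter (fun k => ¬ Applied c x' lam d Fk k)).Nonempty
      · have hk0mem := Finset.max'_mem _ hKne
        rw [Finset.mem_filter, Finset.mem_range] at hk0mem
        obtain ⟨hk0m, hk0A⟩ := hk0mem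
        set k0 := ((Finset.range m).filter (fun k => ¬ Applied c x' lam d Fk k)).max' hKne
          with hk0
        have hk1m : k0 + 1 ≤ m := hk0m
        have hub : ∀ k, k < m → ¬ Applied c x' lam d Fk k → k ≤ k0 := by
          intro k hk hnk
          exact Finset.le_max' _ k
            (Finset.mem_filter.mpr ⟨Finset.mem_range.mpr hk, hnk⟩)
        have hlog2 : (0:ℝ) < 2 * Real.log (2 * (d:ℝ)) := by linarith
        have hfe : ∀ t ∈ feasSet c (k0+1) (pfx Fk (k0+1)),
            cost c (St c x' lam d m (pfx Fk m)).2 ≤ 2 * Real.log (2 * (d:ℝ)) * t := by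
          rintro t ⟨z, hz, hcov, rfl⟩
          apply hUbound z (fun j => (hz j).1)
          intro k hk hnk
          exact hcov ⟨k, Nat.lt_succ_of_le (hub k hk hnk)⟩
        have hne' : (feasSet c (k0+1) (pfx Fk (k0+1))).Nonempty :=
          feas_ne (fun k => hne k.1 (lt_of_lt_of_le k.2 hk1m))
        have hUopt : cost c (St c x' lam d m (pfx Fk m)).2 ≤
            2 * Real.log (2 * (d:ℝ)) * OPTv c (k0+1) (pfx Fk (k0+1)) := by
          have hdiv : cost c (St c x' lam d m (pfx Fk m)).2 / (2 * Real.log (2 * (d:ℝ))) ≤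
              OPTv c (k0+1) (pfx Fk (k0+1)) := by
            apply le_csInf hne'
            intro t ht
            rw [div_le_iff₀ hlog2]
            rw [mul_comm]
            exact hfe t ht
          calc cost c (St c x' lam d m (pfx Fk m)).2
              = cost c (St c x' lam d m (pfx Fk m)).2 / (2 * Real.log (2 * (d:ℝ))) *
                (2 * Real.log (2 * (d:ℝ))) := by field_simp
            _ ≤ OPTv c (k0+1) (pfx Fk (k0+1)) * (2 * Real.log (2 * (d:ℝ))) :=
                mul_le_mul_of_nonneg_right hdiv hlog2.le
            _ = 2 * Real.log (2 * (d:ℝ)) * OPTv c (k0+1) (pfx Fk (k0+1)) := by ring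
        have hS : 1 ≤ ∑ j ∈ Fk k0, x' j := hadv k0 hk0m
        unfold Applied applies at hk0A
        push_neg at hk0A
        have hblock := hk0A hS
        have hboxk := box c x' lam d hc hx' hd k0 (pfx Fk k0)
          (fun k => hne k.1 (lt_of_lt_of_le k.2 (le_of_lt hk0m)))
        have hsv : cost c (stepv x' (St c x' lam d k0 (pfx Fk k0)).1 (Fk k0)) ≤ cost c x' :=
          cost_mono hc (stepv_le (fun j => (hboxk.1 j).2))
        have hoptnn : 0 ≤ OPTv c (k0+1) (pfx Fk (k0+1)) := opt_nonneg hc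
        have hchain : 2 * Real.log (2 * (d:ℝ)) * OPTv c (k0+1) (pfx Fk (k0+1)) ≤
            2 * Real.log (2 * (d:ℝ) / lam) * OPTv c (k0+1) (pfx Fk (k0+1)) := by
          apply mul_le_mul_of_nonneg_right _ hoptnn
          linarith
        linarith
      · have hall : ∀ k, k < m → Applied c x' lam d Fk k := by
          intro k hk
          by_contra hnk
          exact hKne ⟨k, Finset.mem_filter.mpr ⟨Finset.mem_range.mpr hk, hnk⟩⟩
        have h2 := (hQ m le_rfl).2.1 (fun _ => 0) (fun _ => le_refl 0)
          (fun k hk hnk => absurd (hall k hk) hnk)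
        have hz0 : (∑ j, (0:ℝ) * c j *
            Real.log (d * (St c x' lam d m (pfx Fk m)).2 j + 1)) = 0 := by
          apply Finset.sum_eq_zero
          intro j _
          ring
        rw [hz0] at h2
        linarith
    calc (∑ j, c j * max ((St c x' lam d m (pfx Fk m)).1 j) ((St c x' lam d m (pfx Fk m)).2 j))
        ≤ cost c (St c x' lam d m (pfx Fk m)).1 + cost c (St c x' lam d m (pfx Fk m)).2 := hkey
      _ ≤ 2 * cost c x' := by linarith
      _ ≤ 2 / (1 - lam) * cost c x' := by
          have h2div : (2:ℝ) ≤ 2 / (1 - lam) := by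
            rw [le_div_iff₀ (by linarith)]
            nlinarith
          nlinarith [mul_le_mul_of_nonneg_right h2div hcx'0]
      _ = 2 / (1 - lam) * ∑ j, c j * x' j := rfl
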